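/- Let n = 2^r for some positive integer r, and let x_0 ∈ ℝ^n with x̄_0 = (1/n) ∑_{i=1}^n x_{0,i}. Then for the repeated averaging chain under the measure μ_n, with probability 1 there exists K such that for all k ≥ K, x_k is the constant vector (x̄_0, …, x̄_0); that is, μ_n-almost every pair sequence ω admits some K with x_k(ω) = (x̄_0, …, x̄_0) for all k ≥ K. -/

import Mathlib

open MeasureTheory Finset Filter
open scoped ENNReal NNReal

/-- The set of unordered pairs of distinct indices in `Fin n`, encoded as
2-element subsets of `Fin n`. -/
abbrev Pairs (n : ℕ) : Type := {s : Finset (Fin n) // s.card = 2}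

instance (n : ℕ) : MeasurableSpace (Pairs n) := ⊤

/-- The uniform probability measure on the set of pairs. -/
noncomputable def uniformPair (n : ℕ) : Measure (Pairs n) :=
  (Fintype.card (Pairs n) : ℝ≥0∞)⁻¹ • Measure.count

/-- `μ` is the infinite product over `ℕ` of the uniform measure on pairs:
its finite-dimensional marginals are the finite uniform product measures.
(This characterizes the infinite product measure uniquely.) -/
def IsProductLaw (n : ℕ) (μ : Measure (ℕ → Pairs n)) : Prop :=
  ∀ K : ℕ, μ.map (fun ω (i : Fin K) => ω i) = Measure.pi fun _ : Fin K => uniformPair n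

/-- The pair-averaging operation: both coordinates in `s` (a 2-element set `{i,j}`)
are replaced by `(x i + x j)/2`; the other coordinates are unchanged. -/
noncomputable def avgStep {n : ℕ} (s : Finset (Fin n)) (x : Fin n → ℝ) : Fin n → ℝ :=
  fun l => if l ∈ s then (∑ m ∈ s, x m) / 2 else x l

/-- The repeated averaging chain started at `x0`, driven by the pair sequence `ω`. -/
noncomputable def chain {n : ℕ} (x0 : Fin n → ℝ) (ω : ℕ → Pairs n) : ℕ → Fin n → ℝ
  | 0 => x0
  | k + 1 => avgStep (ω k).1 (chain x0 ω k)

/-- `T(k) = ∑_i |x_{k,i} - 1/n|`. -/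
noncomputable def Tdist {n : ℕ} (x0 : Fin n → ℝ) (ω : ℕ → Pairs n) (k : ℕ) : ℝ :=
  ∑ i, |chain x0 ω k i - 1 / n|

/-- The initial vector `(1,0,…,0)`. -/
def e1 (n : ℕ) : Fin n → ℝ := fun i => if i.val = 0 then 1 else 0

/-- The standard normal cumulative distribution function. -/
noncomputable def stdGaussianCDF (x : ℝ) : ℝ :=
  ∫ t in Set.Iic x, (2 * Real.pi) ^ (-(1:ℝ)/2) * Real.exp (-t ^ 2 / 2)

/- ### auxiliary -/

noncomputable def applyList {n : ℕ} (l : List (Pairs n)) (x : Fin n → ℝ) : Fin n → ℝ :=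
  l.foldl (fun y s => avgStep s.1 y) x

@[simp] lemma applyList_nil {n : ℕ} (x : Fin n → ℝ) : applyList [] x = x := rfl

@[simp] lemma applyList_cons {n : ℕ} (s : Pairs n) (l : List (Pairs n)) (x : Fin n → ℝ) :
    applyList (s :: l) x = applyList l (avgStep s.1 x) := rfl

lemma applyList_append {n : ℕ} (l₁ l₂ : List (Pairs n)) (x : Fin n → ℝ) :
    applyList (l₁ ++ l₂) x = applyList l₂ (applyList l₁ x) :=
  List.foldl_append

def GoodWord (n : ℕ) (l : List (Pairs n)) : Prop :=
  ∀ x : Fin n → ℝ, applyList l x = fun _ => (∑ i, x i) / n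

lemma avgStep_mem {n : ℕ} {s : Finset (Fin n)} {x : Fin n → ℝ} {j : Fin n} (h : j ∈ s) :
    avgStep s x j = (∑ m ∈ s, x m) / 2 := if_pos h

lemma avgStep_not_mem {n : ℕ} {s : Finset (Fin n)} {x : Fin n → ℝ} {j : Fin n} (h : j ∉ s) :
    avgStep s x j = x j := if_neg h

lemma sum_avgStep {n : ℕ} (s : Finset (Fin n)) (hs : s.card = 2) (x : Fin n → ℝ) :
    ∑ i, avgStep s x i = ∑ i, x i := by
  classical
  rw [← Finset.sum_add_sum_compl s (avgStep s x), ← Finset.sum_add_sum_compl s x]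
  congr 1
  · have h1 : ∀ i ∈ s, avgStep s x i = (∑ m ∈ s, x m) / 2 := fun i hi => avgStep_mem hi
    rw [Finset.sum_congr rfl h1, Finset.sum_const, hs, nsmul_eq_mul]
    ring
  · exact Finset.sum_congr rfl fun i hi => avgStep_not_mem (Finset.mem_compl.mp hi)

lemma avgStep_const {n : ℕ} (s : Finset (Fin n)) (hs : s.card = 2) (c : ℝ) :
    avgStep s (fun _ => c) = fun _ => c := by
  funext j
  unfold avgStep
  split
  · rw [Finset.sum_const, hs]; push_cast [nsmul_eq_mul]; ring
  · rfl

lemma chain_const {n : ℕ} (c : ℝ) (ω : ℕ → Pairs n) (k : ℕ) :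
    chain (fun _ => c) ω k = fun _ => c := by
  induction k with
  | zero => rfl
  | succ k ih => rw [chain, ih, avgStep_const _ (ω k).2]

lemma sum_chain {n : ℕ} (x0 : Fin n → ℝ) (ω : ℕ → Pairs n) (k : ℕ) :
    ∑ i, chain x0 ω k i = ∑ i, x0 i := by
  induction k with
  | zero => rfl
  | succ k ih => rw [chain, sum_avgStep _ (ω k).2, ih]

lemma chain_add {n : ℕ} (x0 : Fin n → ℝ) (ω : ℕ → Pairs n) (k m : ℕ) :
    chain x0 ω (k + m) = chain (chain x0 ω k) (fun j => ω (k + j)) m := by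
  induction m with
  | zero => rfl
  | succ m ih => rw [← Nat.add_assoc, chain, chain, ih]

lemma chain_eq_applyList {n : ℕ} (y : Fin n → ℝ) (σ : ℕ → Pairs n) (m : ℕ) :
    chain y σ m = applyList (List.ofFn fun j : Fin m => σ j.val) y := by
  induction m with
  | zero => rfl
  | succ m ih =>
    rw [chain, ih, List.ofFn_succ', List.concat_eq_append, applyList_append]
    rfl

/- ### embedding lemmas -/

def mapPair {n N : ℕ} (e : Fin n ↪ Fin N) (s : Pairs n) : Pairs N :=
  ⟨s.1.map e, by rw [Finset.card_map, s.2]⟩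

lemma avgStep_map_apply {n N : ℕ} (e : Fin n ↪ Fin N) (s : Finset (Fin n))
    (x : Fin N → ℝ) (i : Fin n) :
    avgStep (s.map e) x (e i) = avgStep s (x ∘ e) i := by
  unfold avgStep
  by_cases h : i ∈ s
  · rw [if_pos (Finset.mem_map_of_mem e h), if_pos h, Finset.sum_map]
    rfl
  · rw [if_neg, if_neg h]
    · rfl
    · simp only [Finset.mem_map]
      rintro ⟨a, ha, hea⟩
      exact h ((e.injective hea) ▸ ha)

lemma avgStep_map_not_range {n N : ℕ} (e : Fin n ↪ Fin N) (s : Finset (Fin n))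
    (x : Fin N → ℝ) (j : Fin N) (hj : j ∉ Set.range e) :
    avgStep (s.map e) x j = x j := by
  apply avgStep_not_mem
  simp only [Finset.mem_map]
  rintro ⟨a, _, hea⟩
  exact hj ⟨a, hea⟩

lemma applyList_map {n N : ℕ} (e : Fin n ↪ Fin N) (l : List (Pairs n)) (x : Fin N → ℝ) :
    ((applyList (l.map (mapPair e)) x) ∘ e = applyList l (x ∘ e)) ∧
      (∀ j ∉ Set.range e, applyList (l.map (mapPair e)) x j = x j) := by
  induction l generalizing x with
  | nil => exact ⟨rfl, fun _ _ => rfl⟩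
  | cons s l ih =>
    simp only [List.map_cons, applyList_cons]
    refine ⟨?_, ?_⟩
    · rw [(ih _).1]
      have he : (avgStep (mapPair e s).1 x) ∘ e = avgStep s.1 (x ∘ e) := by
        funext i
        simpa [mapPair, Function.comp] using avgStep_map_apply e s.1 x i
      rw [he]
    · intro j hj
      rw [(ih _).2 j hj]
      exact avgStep_map_not_range e s.1 x j hj

/- ### disjoint matching -/

lemma applyList_disjoint {N : ℕ} (l : List (Pairs N)) (c : ℝ) :
    ∀ (x : Fin N → ℝ), l.Pairwise (fun s t => Disjoint s.1 t.1) →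
    (∀ s ∈ l, (∑ m ∈ s.1, x m) / 2 = c) →
    ∀ j, applyList l x j = if ∃ s ∈ l, j ∈ s.1 then c else x j := by
  induction l with
  | nil => intro x _ _ j; simp
  | cons s l ih =>
    intro x hd hc j
    rw [applyList_cons]
    have hdisj := (List.pairwise_cons.mp hd).1
    have htail : ∀ t ∈ l, (∑ m ∈ t.1, (avgStep s.1 x) m) / 2 = c := by
      intro t ht
      have : ∑ m ∈ t.1, (avgStep s.1 x) m = ∑ m ∈ t.1, x m := by
        apply Finset.sum_congr rfl
        intro m hm
        exact avgStep_not_mem (Finset.disjoint_right.mp (hdisj t ht) hm)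
      rw [this]; exact hc t (List.mem_cons_of_mem s ht)
    rw [ih (avgStep s.1 x) (List.pairwise_cons.mp hd).2 htail j]
    by_cases h1 : ∃ t ∈ l, j ∈ t.1
    · rw [if_pos h1, if_pos ⟨h1.choose, List.mem_cons_of_mem s h1.choose_spec.1, h1.choose_spec.2⟩]
    · rw [if_neg h1]
      by_cases h2 : j ∈ s.1
      · rw [avgStep_mem h2, hc s List.mem_cons_self, if_pos ⟨s, List.mem_cons_self, h2⟩]
      · rw [avgStep_not_mem h2, if_neg]
        rintro ⟨t, ht, hjt⟩
        rcases List.mem_cons.mp ht with rfl | ht'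
        · exact h2 hjt
        · exact h1 ⟨t, ht', hjt⟩

/- ### doubling -/

def crossPair (n : ℕ) (i : Fin n) : Pairs (n + n) :=
  ⟨{Fin.castAdd n i, Fin.natAdd n i}, by
    rw [Finset.card_insert_of_notMem, Finset.card_singleton]
    simp only [Finset.mem_singleton]
    intro h
    have := congrArg Fin.val h
    simp [Fin.castAdd, Fin.natAdd] at this
    omega⟩

lemma good_double {n : ℕ} (hn : 0 < n) {l : List (Pairs n)} (h : GoodWord n l) :
    ∃ l' : List (Pairs (n + n)), GoodWord (n + n) l' := by
  classical
  refine ⟨l.map (mapPair (Fin.castAddEmb n)) ++ l.map (mapPair (Fin.natAddEmb n))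
    ++ List.ofFn (crossPair n), ?_⟩
  intro x
  set a : ℝ := (∑ i, x (Fin.castAdd n i)) / n with ha
  set b : ℝ := (∑ i, x (Fin.natAdd n i)) / n with hb
  rw [applyList_append, applyList_append]
  set z := applyList (l.map (mapPair (Fin.castAddEmb n))) x with hz
  have hzL : ∀ i : Fin n, z (Fin.castAdd n i) = a := by
    intro i
    have := congrFun (applyList_map (Fin.castAddEmb n) l x).1 i
    rw [h (x ∘ (Fin.castAddEmb n))] at this
    exact this
  have hzR : ∀ i : Fin n, z (Fin.natAdd n i) = x (Fin.natAdd n i) := by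
    intro i
    apply (applyList_map (Fin.castAddEmb n) l x).2
    rintro ⟨j, hj⟩
    have := congrArg Fin.val hj
    simp [Fin.castAddEmb] at this
    omega
  set y := applyList (l.map (mapPair (Fin.natAddEmb n))) z with hy
  have hyR : ∀ i : Fin n, y (Fin.natAdd n i) = b := by
    intro i
    have h1 : y (Fin.natAdd n i) = (∑ j : Fin n, z (Fin.natAdd n j)) / n := by
      have h2 := congrFun (applyList_map (Fin.natAddEmb n) l z).1 i
      rw [h (z ∘ (Fin.natAddEmb n))] at h2
      exact h2
    rw [h1, Finset.sum_congr rfl fun j _ => hzR j]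
  have hyL : ∀ i : Fin n, y (Fin.castAdd n i) = a := by
    intro i
    rw [hy]
    have : applyList (l.map (mapPair (Fin.natAddEmb n))) z (Fin.castAdd n i)
        = z (Fin.castAdd n i) := by
      apply (applyList_map (Fin.natAddEmb n) l z).2
      rintro ⟨j, hj⟩
      have := congrArg Fin.val hj
      have h3 : ((Fin.castAdd n i : Fin (n + n)) : ℕ) = (i : ℕ) := rfl
      have h4 : ((Fin.natAddEmb n j : Fin (n + n)) : ℕ) = n + (j : ℕ) := rfl
      rw [h3, h4] at this
      have := i.isLt
      omega
    rw [this, hzL]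
  -- now apply the cross pairs
  have hcross_ne : ∀ i : Fin n, Fin.castAdd n i ≠ Fin.natAdd n i := by
    intro i h
    have := congrArg Fin.val h
    simp [Fin.castAdd, Fin.natAdd] at this
    omega
  have hdisj : ∀ i i' : Fin n, i ≠ i' → Disjoint (crossPair n i).1 (crossPair n i').1 := by
    intro i i' hne
    rw [Finset.disjoint_left]
    intro a ha ha'
    simp only [crossPair, Finset.mem_insert, Finset.mem_singleton] at ha ha'
    have hvv : i.val ≠ i'.val := fun hv => hne (Fin.ext hv)
    have hi := i.isLt; have hi' := i'.isLt
    rcases ha with rfl | rfl <;> rcases ha' with h | h <;>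
      · have := congrArg Fin.val h
        simp [Fin.castAdd, Fin.natAdd] at this
        omega
  have hpw : (List.ofFn (crossPair n)).Pairwise (fun s t => Disjoint s.1 t.1) := by
    rw [List.pairwise_iff_get]
    intro i j hij
    simp only [List.get_ofFn]
    apply hdisj
    intro hEq
    have := congrArg Fin.val hEq
    simp at this
    omega
  set c : ℝ := (a + b) / 2 with hc
  have hsum : ∀ s ∈ List.ofFn (crossPair n), (∑ m ∈ s.1, y m) / 2 = c := by
    intro s hs
    rw [List.mem_ofFn] at hs
    obtain ⟨i, rfl⟩ := hs
    rw [show (crossPair n i).1 = {Fin.castAdd n i, Fin.natAdd n i} from rfl,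
      Finset.sum_insert (by simpa using hcross_ne i), Finset.sum_singleton, hyL, hyR]
  have hfinal := applyList_disjoint (List.ofFn (crossPair n)) c y hpw hsum
  funext j
  have hmem : ∃ s ∈ List.ofFn (crossPair n), j ∈ s.1 := by
    refine Fin.addCases (fun i => ?_) (fun i => ?_) j
    · exact ⟨crossPair n i, List.mem_ofFn.mpr ⟨i, rfl⟩, Finset.mem_insert_self _ _⟩
    · exact ⟨crossPair n i, List.mem_ofFn.mpr ⟨i, rfl⟩, by
        simp [crossPair]⟩
  rw [hfinal j, if_pos hmem]
  -- identify c with the global average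
  have hnR : (n : ℝ) ≠ 0 := Nat.cast_ne_zero.mpr hn.ne'
  have hsplit : ∑ i : Fin (n + n), x i
      = (∑ i : Fin n, x (Fin.castAdd n i)) + ∑ i : Fin n, x (Fin.natAdd n i) :=
    Fin.sum_univ_add x
  have hn2R : (n : ℝ) + n ≠ 0 := by positivity
  rw [hc, ha, hb, hsplit]
  push_cast
  rw [← add_div, div_div]
  congr 1
  ring

lemma exists_good (r : ℕ) : ∃ l : List (Pairs (2 ^ r)), GoodWord (2 ^ r) l := by
  induction r with
  | zero =>
    refine ⟨[], ?_⟩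
    intro x
    funext j
    simp only [applyList_nil]
    haveI hss : Subsingleton (Fin (2 ^ 0)) := by rw [pow_zero]; infer_instance
    rw [Fintype.sum_subsingleton (fun i => x i) j]
    norm_num
  | succ r ih =>
    obtain ⟨l, hl⟩ := ih
    obtain ⟨l', hl'⟩ := good_double (by positivity) hl
    have hcast : 2 ^ (r + 1) = 2 ^ r + 2 ^ r := by rw [pow_succ, mul_two]
    exact hcast ▸ ⟨l', hl'⟩

/- ### measure-theoretic helpers -/

instance (n : ℕ) : MeasurableSingletonClass (Pairs n) := ⟨fun _ => trivial⟩

instance (n : ℕ) : IsFiniteMeasure (uniformPair n) := by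
  constructor
  rw [uniformPair, Measure.smul_apply, Measure.count_univ, smul_eq_mul]
  rcases Nat.eq_zero_or_pos (Fintype.card (Pairs n)) with h | h
  · simp [h]
  · exact ENNReal.mul_lt_top (ENNReal.inv_lt_top.mpr (by exact_mod_cast h)) (by simp)

lemma measurableSet_all {n K : ℕ} (S : Set (Fin K → Pairs n)) : MeasurableSet S := by
  have h1 : ∀ f : Fin K → Pairs n, MeasurableSet ({f} : Set (Fin K → Pairs n)) := by
    intro f
    rw [← Set.univ_pi_singleton f]
    exact MeasurableSet.pi Set.countable_univ fun i _ => trivial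
  rw [← Set.biUnion_of_singleton S]
  exact MeasurableSet.biUnion (Set.to_countable S) fun f _ => h1 f

lemma pi_uniform_singleton {n K : ℕ} (f : Fin K → Pairs n) :
    (Measure.pi fun _ : Fin K => uniformPair n) {f}
      = ((Fintype.card (Pairs n) : ℝ≥0∞)⁻¹) ^ K := by
  rw [← Set.univ_pi_singleton f, Measure.pi_pi]
  have h1 : ∀ i : Fin K, uniformPair n {f i} = (Fintype.card (Pairs n) : ℝ≥0∞)⁻¹ := by
    intro i
    rw [uniformPair, Measure.smul_apply, Measure.count_singleton, smul_eq_mul, mul_one]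
  rw [Finset.prod_congr rfl fun i _ => h1 i, Finset.prod_const, Finset.card_univ,
    Fintype.card_fin]

lemma pi_uniform_le_card {n K : ℕ} (S : Set (Fin K → Pairs n)) :
    (Measure.pi fun _ : Fin K => uniformPair n) S
      ≤ (Nat.card S) * ((Fintype.card (Pairs n) : ℝ≥0∞)⁻¹) ^ K := by
  classical
  have hfin : S.Finite := Set.toFinite S
  have hcov : S ⊆ ⋃ f ∈ hfin.toFinset, ({f} : Set (Fin K → Pairs n)) := by
    intro g hg
    simp only [Set.mem_iUnion, Set.mem_singleton_iff, Set.Finite.mem_toFinset]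
    exact ⟨g, hg, rfl⟩
  calc (Measure.pi fun _ : Fin K => uniformPair n) S
      ≤ ∑ f ∈ hfin.toFinset, (Measure.pi fun _ : Fin K => uniformPair n) {f} :=
        le_trans (measure_mono hcov) (measure_biUnion_finset_le _ _)
    _ = hfin.toFinset.card * ((Fintype.card (Pairs n) : ℝ≥0∞)⁻¹) ^ K := by
        rw [Finset.sum_congr rfl fun f _ => pi_uniform_singleton f, Finset.sum_const,
          nsmul_eq_mul]
    _ = (Nat.card S) * ((Fintype.card (Pairs n) : ℝ≥0∞)⁻¹) ^ K := by
        rw [Nat.card_eq_card_finite_toFinset hfin]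

/- ### block combinatorics -/

def idx (M L : ℕ) (m : Fin M) (j : Fin L) : Fin (M * L) :=
  ⟨m.val * L + j.val, by
    have h1 : m.val * L + j.val < (m.val + 1) * L := by
      have := j.isLt
      rw [Nat.succ_mul]
      omega
    exact lt_of_lt_of_le h1 (Nat.mul_le_mul_right L m.isLt)⟩

def blockT (n M L : ℕ) (w : Fin L → Pairs n) : Set (Fin (M * L) → Pairs n) :=
  {f | ∀ m : Fin M, (fun j : Fin L => f (idx M L m j)) ≠ w}

lemma card_blockT (n M L : ℕ) (hL : 0 < L) (w : Fin L → Pairs n) :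
    Nat.card (blockT n M L w)
      ≤ ((Fintype.card (Pairs n)) ^ L - 1) ^ M := by
  classical
  set N := Fintype.card (Pairs n)
  have hcard2 : Nat.card {g : Fin L → Pairs n // g ≠ w} = N ^ L - 1 := by
    have h1 : Fintype.card {g : Fin L → Pairs n // ¬ (g = w)}
        = Fintype.card (Fin L → Pairs n) - Fintype.card {g : Fin L → Pairs n // g = w} :=
      Fintype.card_subtype_compl _
    have h0 : Nat.card {g : Fin L → Pairs n // g ≠ w}
        = Fintype.card {g : Fin L → Pairs n // ¬ (g = w)} := Nat.card_eq_fintype_card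
    rw [h0, h1, Fintype.card_subtype_eq, Fintype.card_fun, Fintype.card_fin]
  have hΦ : ∃ Φ : blockT n M L w → (Fin M → {g : Fin L → Pairs n // g ≠ w}),
      Function.Injective Φ := by
    refine ⟨fun f m => ⟨fun j => f.1 (idx M L m j), f.2 m⟩, ?_⟩
    intro f f' hff
    apply Subtype.ext
    funext i
    have hm : i.val / L < M := (Nat.div_lt_iff_lt_mul hL).mpr i.isLt
    have hj : i.val % L < L := Nat.mod_lt _ hL
    have hidx : idx M L ⟨i.val / L, hm⟩ ⟨i.val % L, hj⟩ = i := by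
      apply Fin.ext
      show i.val / L * L + i.val % L = i.val
      rw [Nat.mul_comm]
      exact Nat.div_add_mod _ _
    have := congrFun (congrArg Subtype.val (congrFun hff ⟨i.val / L, hm⟩)) ⟨i.val % L, hj⟩
    simpa [hidx] using this
  obtain ⟨Φ, hΦinj⟩ := hΦ
  calc Nat.card (blockT n M L w)
      ≤ Nat.card (Fin M → {g : Fin L → Pairs n // g ≠ w}) :=
        Nat.card_le_card_of_injective Φ hΦinj
    _ = (N ^ L - 1) ^ M := by
        rw [Nat.card_pi]
        simp only [hcard2]
        rw [Finset.prod_const, Finset.card_univ, Fintype.card_fin]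

/-- **Almost sure finite termination for powers of 2.** If `n = 2^r` (`r ≥ 1`), then for
any initial vector `x₀`, `μₙ`-almost every pair sequence `ω` admits some `K` such that
`x_k(ω)` equals the constant vector `(x̄₀,…,x̄₀)` for all `k ≥ K`. -/
theorem as_finite_termination_pow_two (n r : ℕ) (hr : 1 ≤ r) (hn : n = 2 ^ r)
    (μ : Measure (ℕ → Pairs n)) (hμ : IsProductLaw n μ) (x0 : Fin n → ℝ) :
    ∀ᵐ ω ∂μ, ∃ K : ℕ, ∀ k : ℕ, K ≤ k →
      chain x0 ω k = fun _ => (∑ i, x0 i) / n := by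
  classical
  have hn2 : 2 ≤ n := by
    rw [hn]
    calc 2 = 2 ^ 1 := (pow_one 2).symm
      _ ≤ 2 ^ r := Nat.pow_le_pow_right (by norm_num) hr
  obtain ⟨l, hl⟩ : ∃ l : List (Pairs n), GoodWord n l := hn ▸ exists_good r
  set N := Fintype.card (Pairs n) with hNdef
  set L := l.length with hLdef
  -- the word is nonempty
  have hL : 0 < L := by
    by_contra hc
    have hnil : l = [] := List.length_eq_zero_iff.mp (by omega)
    have h1 := congrFun (hl (e1 n)) ⟨1, by omega⟩
    have h2 := congrFun (hl (e1 n)) ⟨0, by omega⟩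
    rw [hnil] at h1 h2
    simp only [applyList_nil, e1] at h1 h2
    norm_num at h1 h2
    exact zero_ne_one (h1.trans h2.symm)
  have hNpos : 0 < N := by
    refine Fintype.card_pos_iff.mpr ⟨⟨{⟨0, by omega⟩, ⟨1, by omega⟩}, ?_⟩⟩
    rw [Finset.card_insert_of_notMem, Finset.card_singleton]
    simp only [Finset.mem_singleton]
    intro hEq
    exact absurd (congrArg Fin.val hEq) (by simp)
  set wfun : Fin L → Pairs n := l.get with hwdef
  set B : Set (ℕ → Pairs n) :=
    {ω | ∀ m : ℕ, (fun j : Fin L => ω (m * L + j.val)) ≠ wfun} with hBdef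
  -- B has measure zero
  have hB0 : μ B = 0 := by
    set ρ : ℝ≥0∞ := ((N ^ L - 1 : ℕ) : ℝ≥0∞) * (((N : ℝ≥0∞)) ^ L)⁻¹ with hρdef
    have hbound : ∀ M : ℕ, μ B ≤ ρ ^ M := by
      intro M
      have hmeas : Measurable (fun (ω : ℕ → Pairs n) (i : Fin (M * L)) => ω i.val) :=
        measurable_pi_lambda _ fun i => measurable_pi_apply i.val
      have hsub : B ⊆ (fun ω (i : Fin (M * L)) => ω i.val) ⁻¹' (blockT n M L wfun) := by
        intro ω hω
        intro m
        exact hω (m.val)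
      calc μ B ≤ μ ((fun ω (i : Fin (M * L)) => ω i.val) ⁻¹' (blockT n M L wfun)) :=
            measure_mono hsub
        _ = (μ.map (fun ω (i : Fin (M * L)) => ω i.val)) (blockT n M L wfun) :=
            (Measure.map_apply hmeas (measurableSet_all _)).symm
        _ = (Measure.pi fun _ : Fin (M * L) => uniformPair n) (blockT n M L wfun) := by
            rw [hμ (M * L)]
        _ ≤ (Nat.card (blockT n M L wfun)) * ((N : ℝ≥0∞)⁻¹) ^ (M * L) :=
            pi_uniform_le_card _
        _ ≤ ((N ^ L - 1 : ℕ) ^ M : ℕ) * ((N : ℝ≥0∞)⁻¹) ^ (M * L) := by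
            gcongr
            exact_mod_cast card_blockT n M L hL wfun
        _ = ρ ^ M := by
            rw [hρdef, mul_pow, Nat.cast_pow]
            congr 1
            rw [mul_comm M L, pow_mul, ENNReal.inv_pow]
    have hρlt : ρ < 1 := by
      have hNL : 1 ≤ N ^ L := Nat.one_le_pow _ _ hNpos
      have hltN : (N ^ L - 1 : ℕ) < N ^ L := by omega
      rw [hρdef, ← div_eq_mul_inv]
      rw [ENNReal.div_lt_iff (Or.inl (by positivity)) (Or.inl (by simp))]
      rw [one_mul]
      exact_mod_cast hltN
    have htend := ENNReal.tendsto_pow_atTop_nhds_zero_of_lt_one hρlt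
    exact le_antisymm (ge_of_tendsto' htend hbound) zero_le
  rw [ae_iff]
  refine measure_mono_null ?_ hB0
  intro ω hω
  simp only [Set.mem_setOf_eq] at hω
  push_neg at hω
  -- suppose ω ∉ B; derive a contradiction with hω
  by_contra hB
  simp only [hBdef, Set.mem_setOf_eq, not_forall, not_not] at hB
  obtain ⟨m, hm⟩ := hB
  set K0 := m * L with hK0
  have hchainK : chain x0 ω (K0 + L) = fun _ => (∑ i, x0 i) / n := by
    rw [chain_add, chain_eq_applyList]
    have hofn : (List.ofFn fun j : Fin L => ω (K0 + j.val)) = l := by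
      have : (fun j : Fin L => ω (K0 + j.val)) = wfun := by
        funext j
        exact congrFun hm j
      rw [this, hwdef, List.ofFn_get]
    rw [hofn, hl, sum_chain]
  obtain ⟨k, hk, hne⟩ := hω (K0 + L)
  apply hne
  have hsplit : k = (K0 + L) + (k - (K0 + L)) := by omega
  rw [hsplit, chain_add, hchainK, chain_const]
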